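/- For two agents with valuations over m objects and degree of degeneracy D(v), the number of distinct undirected consumption graphs of fractionally Pareto-optimal allocations is at most 3m·3^{D(v)}. -/

import Mathlib

open Finset

/-- An allocation: nonnegative matrix with column sums 1. -/
def IsAllocation {n m : ℕ} (z : Fin n → Fin m → ℝ) : Prop :=
  (∀ i o, 0 ≤ z i o) ∧ ∀ o, ∑ i, z i o = 1

/-- Additive utility of agent `i` at allocation `z`. -/
def utility {n m : ℕ} (v z : Fin n → Fin m → ℝ) (i : Fin n) : ℝ :=
  ∑ o, v i o * z i o

/-- Fractional Pareto optimality: no feasible allocation weakly improves everyone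
and strictly improves someone. -/
def IsFPO {n m : ℕ} (v z : Fin n → Fin m → ℝ) : Prop :=
  ¬ ∃ y, IsAllocation y ∧ (∀ i, utility v z i ≤ utility v y i) ∧
    ∃ i, utility v z i < utility v y i

/-- Number of sharings of allocation `z`. -/
noncomputable def sharings {n m : ℕ} (z : Fin n → Fin m → ℝ) : ℕ :=
  ∑ o : Fin m, ((Finset.univ.filter (fun i : Fin n => 0 < z i o)).card - 1)

lemma master {m : ℕ} {v z : Fin 2 → Fin m → ℝ} (hz : IsAllocation z) (hf : IsFPO v z)
    (c : Fin m → ℝ) (h0 : ∀ p, 0 ≤ z 0 p + c p) (h1 : ∀ p, 0 ≤ z 1 p - c p)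
    (d0 : 0 ≤ ∑ p, v 0 p * c p) (d1 : ∑ p, v 1 p * c p ≤ 0)
    (hs : 0 < ∑ p, v 0 p * c p ∨ ∑ p, v 1 p * c p < 0) : False := by
  apply hf
  have e0 : utility v ![fun p => z 0 p + c p, fun p => z 1 p - c p] 0
      = utility v z 0 + ∑ p, v 0 p * c p := by
    simp only [utility, Matrix.cons_val_zero, ← Finset.sum_add_distrib]
    congr 1; ext p; ring
  have e1 : utility v ![fun p => z 0 p + c p, fun p => z 1 p - c p] 1
      = utility v z 1 - ∑ p, v 1 p * c p := by
    simp only [utility, Matrix.cons_val_one, Matrix.head_cons, Matrix.cons_val_zero, ← Finset.sum_sub_distrib]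
    congr 1; ext p; ring
  refine ⟨![fun p => z 0 p + c p, fun p => z 1 p - c p], ⟨?_, ?_⟩, ?_, ?_⟩
  · intro i p
    fin_cases i
    · simpa using h0 p
    · simpa using h1 p
  · intro p
    rw [Fin.sum_univ_two]
    have := hz.2 p
    rw [Fin.sum_univ_two] at this
    simp only [Matrix.cons_val_zero, Matrix.cons_val_one, Matrix.head_cons]
    linarith
  · intro i
    match i with
    | 0 => rw [e0]; linarith
    | 1 => rw [e1]; linarith
  · rcases hs with h | h
    · exact ⟨0, by rw [e0]; linarith⟩
    · exact ⟨1, by rw [e1]; linarith⟩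

lemma sum_single {m : ℕ} (f : Fin m → ℝ) (o : Fin m) (a : ℝ) :
    ∑ p, f p * (if p = o then a else 0) = f o * a := by
  simp [mul_ite, Finset.sum_ite_eq']

lemma LA {m : ℕ} {v z : Fin 2 → Fin m → ℝ} (hz : IsAllocation z) (hf : IsFPO v z)
    {o : Fin m} (ho : 0 < z 1 o) (hv1 : v 1 o ≤ 0) (hv0 : 0 ≤ v 0 o)
    (hst : v 1 o < 0 ∨ 0 < v 0 o) : False := by
  refine master hz hf (fun p => if p = o then z 1 o else 0) ?_ ?_ ?_ ?_ ?_
  · intro p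
    have := hz.1 0 p
    split <;> [nlinarith; linarith]
  · intro p
    rcases eq_or_ne p o with rfl | h
    · simp
    · simpa [h] using hz.1 1 p
  · rw [sum_single]; positivity
  · rw [sum_single]; exact mul_nonpos_of_nonpos_of_nonneg hv1 ho.le
  · rw [sum_single, sum_single]
    rcases hst with h | h
    · exact Or.inr (mul_neg_of_neg_of_pos h ho)
    · exact Or.inl (mul_pos h ho)

lemma LB {m : ℕ} {v z : Fin 2 → Fin m → ℝ} (hz : IsAllocation z) (hf : IsFPO v z)
    {o : Fin m} (ho : 0 < z 0 o) (hv1 : 0 ≤ v 1 o) (hv0 : v 0 o ≤ 0)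
    (hst : 0 < v 1 o ∨ v 0 o < 0) : False := by
  refine master hz hf (fun p => if p = o then -(z 0 o) else 0) ?_ ?_ ?_ ?_ ?_
  · intro p
    rcases eq_or_ne p o with rfl | h
    · simp
    · simpa [h] using hz.1 0 p
  · intro p
    have := hz.1 1 p
    split <;> linarith
  · rw [sum_single]; nlinarith
  · rw [sum_single]; nlinarith
  · rw [sum_single, sum_single]
    rcases hst with h | h
    · exact Or.inr (by nlinarith)
    · exact Or.inl (by nlinarith)

lemma sum_double {m : ℕ} (f : Fin m → ℝ) {o o' : Fin m} (hne : o ≠ o') (A B : ℝ) :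
    ∑ p, f p * (if p = o then A else if p = o' then B else 0) = f o * A + f o' * B := by
  have : ∀ p ∈ Finset.univ, f p * (if p = o then A else if p = o' then B else 0)
      = (if p = o then f o * A else 0) + (if p = o' then f o' * B else 0) := by
    intro p _
    rcases eq_or_ne p o with rfl | h
    · simp [hne]
    · rcases eq_or_ne p o' with rfl | h'
      · simp [h]
      · simp [h, h']
  rw [Finset.sum_congr rfl this, Finset.sum_add_distrib]
  simp [Finset.sum_ite_eq']

set_option maxHeartbeats 1000000 in
lemma KP {m : ℕ} {v z : Fin 2 → Fin m → ℝ} (hz : IsAllocation z) (hf : IsFPO v z)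
    {o o' : Fin m} (hT : 0 < v 0 o * v 1 o) (hT' : 0 < v 0 o' * v 1 o')
    (hold : if 0 < v 1 o then 0 < z 1 o else 0 < z 0 o)
    (hold' : if 0 < v 1 o' then 0 < z 0 o' else 0 < z 1 o') :
    v 0 o / v 1 o ≤ v 0 o' / v 1 o' := by
  by_contra hcon
  push_neg at hcon
  set a := |v 0 o| with ha_def
  set b := |v 1 o| with hb_def
  set a' := |v 0 o'| with ha'_def
  set b' := |v 1 o'| with hb'_def
  have ha : 0 < a := abs_pos.mpr (fun h => by rw [h] at hT; simp at hT)
  have hb : 0 < b := abs_pos.mpr (fun h => by rw [h] at hT; simp at hT)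
  have ha' : 0 < a' := abs_pos.mpr (fun h => by rw [h] at hT'; simp at hT')
  have hb' : 0 < b' := abs_pos.mpr (fun h => by rw [h] at hT'; simp at hT')
  have hrpos : 0 < v 0 o / v 1 o := div_pos_iff.mpr (by rcases mul_pos_iff.mp hT with ⟨h1, h2⟩ | ⟨h1, h2⟩ <;> [left; right] <;> exact ⟨h1, h2⟩)
  have hrpos' : 0 < v 0 o' / v 1 o' := div_pos_iff.mpr (by rcases mul_pos_iff.mp hT' with ⟨h1, h2⟩ | ⟨h1, h2⟩ <;> [left; right] <;> exact ⟨h1, h2⟩)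
  have hreq : v 0 o / v 1 o = a / b := by
    rw [ha_def, hb_def, ← abs_div, abs_of_pos hrpos]
  have hreq' : v 0 o' / v 1 o' = a' / b' := by
    rw [ha'_def, hb'_def, ← abs_div, abs_of_pos hrpos']
  have hcon' : a' / b' < a / b := by rw [← hreq, ← hreq']; exact hcon
  have cross : a' * b < a * b' := (div_lt_div_iff₀ hb' hb).mp hcon'
  have hAB : a' / a < b' / b := (div_lt_div_iff₀ ha hb).mpr (by linarith [cross])
  set t := (a' / a + b' / b) / 2 with ht_def
  have htA : a' / a < t := by rw [ht_def]; linarith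
  have htB : t < b' / b := by rw [ht_def]; linarith
  have ht : 0 < t := lt_of_le_of_lt (div_nonneg ha'.le ha.le) htA
  have hta : a' < t * a := (div_lt_iff₀ ha).mp htA
  have htb : t * b < b' := (lt_div_iff₀ hb).mp htB
  have hne : o ≠ o' := by
    rintro rfl
    exact absurd rfl (ne_of_gt hcon)
  set e : ℝ := if 0 < v 1 o then 1 else -1 with he_def
  set e' : ℝ := if 0 < v 1 o' then -1 else 1 with he'_def
  set ζ : ℝ := if 0 < v 1 o then z 1 o else z 0 o with hζ_def
  set ζ' : ℝ := if 0 < v 1 o' then z 0 o' else z 1 o' with hζ'_def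
  have hζ : 0 < ζ := by
    rw [hζ_def]; by_cases h : 0 < v 1 o
    · rw [if_pos h]; rw [if_pos h] at hold; exact hold
    · rw [if_neg h]; rw [if_neg h] at hold; exact hold
  have hζ' : 0 < ζ' := by
    rw [hζ'_def]; by_cases h : 0 < v 1 o'
    · rw [if_pos h]; rw [if_pos h] at hold'; exact hold'
    · rw [if_neg h]; rw [if_neg h] at hold'; exact hold'
  have eb : e * v 1 o = b := by
    rw [he_def, hb_def]
    split
    · rw [abs_of_pos ‹_›]; ring
    · rw [abs_of_neg (by rcases mul_pos_iff.mp hT with ⟨h1, h2⟩ | ⟨h1, h2⟩ <;> first | assumption | exact absurd h2 ‹_›)]; ring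
  have ea : e * v 0 o = a := by
    rw [he_def, ha_def]
    by_cases h : 0 < v 1 o
    · have h0 : 0 < v 0 o := by rcases mul_pos_iff.mp hT with ⟨h1, h2⟩ | ⟨h1, h2⟩ <;> [exact h1; exact absurd h h2.asymm.elim]
      rw [if_pos h, abs_of_pos h0]; ring
    · have h0 : v 0 o < 0 := by rcases mul_pos_iff.mp hT with ⟨h1, h2⟩ | ⟨h1, h2⟩ <;> [exact absurd h2 h; exact h1]
      rw [if_neg h, abs_of_neg h0]; ring
  have eb' : e' * v 1 o' = -b' := by
    rw [he'_def, hb'_def]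
    split
    · rw [abs_of_pos ‹_›]; ring
    · rw [abs_of_neg (by rcases mul_pos_iff.mp hT' with ⟨h1, h2⟩ | ⟨h1, h2⟩ <;> first | assumption | exact absurd h2 ‹_›)]; ring
  have ea' : e' * v 0 o' = -a' := by
    rw [he'_def, ha'_def]
    by_cases h : 0 < v 1 o'
    · have h0 : 0 < v 0 o' := by rcases mul_pos_iff.mp hT' with ⟨h1, h2⟩ | ⟨h1, h2⟩ <;> [exact h1; exact absurd h h2.asymm.elim]
      rw [if_pos h, abs_of_pos h0]; ring
    · have h0 : v 0 o' < 0 := by rcases mul_pos_iff.mp hT' with ⟨h1, h2⟩ | ⟨h1, h2⟩ <;> [exact absurd h2 h; exact h1]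
      rw [if_neg h, abs_of_neg h0]; ring
  set ε : ℝ := min (ζ / (t + 1)) ζ' with hε_def
  have hε : 0 < ε := lt_min (div_pos hζ (by linarith)) hζ'
  have hεζ' : ε ≤ ζ' := min_le_right _ _
  have hεt : ε * t ≤ ζ := by
    have h1 : ε ≤ ζ / (t + 1) := min_le_left _ _
    have h2 : ε * (t + 1) ≤ ζ := by
      rw [← le_div_iff₀ (by linarith)]; exact h1
    nlinarith
  have hεtpos : 0 < ε * t := mul_pos hε ht
  have hta2 : 0 < ε * (t * a - a') := mul_pos hε (by linarith)
  have htb2 : 0 < ε * (b' - t * b) := mul_pos hε (by linarith)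
  clear_value t ε
  clear_value a b a' b'
  set c : Fin m → ℝ := fun p => if p = o then e * (ε * t) else if p = o' then e' * ε else 0 with hc_def
  have csum : ∀ i : Fin 2, ∑ p, v i p * c p = v i o * (e * (ε * t)) + v i o' * (e' * ε) := by
    intro i
    exact sum_double (v i) hne _ _
  refine master hz hf c ?_ ?_ ?_ ?_ ?_
  · intro p
    have hzp := hz.1 0 p
    rw [hc_def]
    dsimp only
    rcases eq_or_ne p o with rfl | h
    · rw [if_pos rfl, he_def]
      by_cases h1 : 0 < v 1 p
      · rw [if_pos h1]; linarith
      · rw [if_neg h1]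
        have : ζ = z 0 p := by rw [hζ_def, if_neg h1]
        linarith
    · rw [if_neg h]
      rcases eq_or_ne p o' with rfl | h'
      · rw [if_pos rfl, he'_def]
        by_cases h1 : 0 < v 1 p
        · rw [if_pos h1]
          have : ζ' = z 0 p := by rw [hζ'_def, if_pos h1]
          linarith
        · rw [if_neg h1]; linarith
      · rw [if_neg h']; linarith
  · intro p
    have hzp := hz.1 1 p
    rw [hc_def]
    dsimp only
    rcases eq_or_ne p o with rfl | h
    · rw [if_pos rfl, he_def]
      by_cases h1 : 0 < v 1 p
      · rw [if_pos h1]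
        have : ζ = z 1 p := by rw [hζ_def, if_pos h1]
        linarith
      · rw [if_neg h1]; linarith
    · rw [if_neg h]
      rcases eq_or_ne p o' with rfl | h'
      · rw [if_pos rfl, he'_def]
        by_cases h1 : 0 < v 1 p
        · rw [if_pos h1]; linarith
        · rw [if_neg h1]
          have : ζ' = z 1 p := by rw [hζ'_def, if_neg h1]
          linarith
      · rw [if_neg h']; linarith
  · rw [csum 0]
    have : v 0 o * (e * (ε * t)) + v 0 o' * (e' * ε) = (e * v 0 o) * (ε * t) + (e' * v 0 o') * ε := by ring
    rw [this, ea, ea']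
    nlinarith [hta2]
  · rw [csum 1]
    have : v 1 o * (e * (ε * t)) + v 1 o' * (e' * ε) = (e * v 1 o) * (ε * t) + (e' * v 1 o') * ε := by ring
    rw [this, eb, eb']
    nlinarith [htb2]
  · right
    rw [csum 1]
    have : v 1 o * (e * (ε * t)) + v 1 o' * (e' * ε) = (e * v 1 o) * (ε * t) + (e' * v 1 o') * ε := by ring
    rw [this, eb, eb']
    nlinarith [htb2]

noncomputable def Tset {m : ℕ} (v : Fin 2 → Fin m → ℝ) : Finset (Fin m) :=
  Finset.univ.filter (fun o => 0 < v 0 o * v 1 o)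

noncomputable def Rset {m : ℕ} (v : Fin 2 → Fin m → ℝ) : Finset ℝ :=
  if (Tset v).Nonempty then (Tset v).image (fun o => v 0 o / v 1 o) else {1}

lemma Rset_pos {m : ℕ} (v : Fin 2 → Fin m → ℝ) : ∀ r ∈ Rset v, (0:ℝ) < r := by
  intro r hr
  rw [Rset] at hr
  split at hr
  · obtain ⟨o, ho, rfl⟩ := Finset.mem_image.mp hr
    have hT : 0 < v 0 o * v 1 o := (Finset.mem_filter.mp ho).2
    exact div_pos_iff.mpr (by rcases mul_pos_iff.mp hT with ⟨h1, h2⟩ | ⟨h1, h2⟩ <;> [left; right] <;> exact ⟨h1, h2⟩)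
  · simp only [Finset.mem_singleton] at hr
    rw [hr]; norm_num

lemma Rset_card {m : ℕ} (v : Fin 2 → Fin m → ℝ) (hm : 0 < m) : (Rset v).card ≤ m := by
  rw [Rset]
  split
  · exact le_trans (Finset.card_image_le) (le_trans (Finset.card_filter_le _ _) (by simp))
  · simp; omega

lemma member {m : ℕ} {v z : Fin 2 → Fin m → ℝ} (hz : IsAllocation z) (hf : IsFPO v z) :
    ∃ r ∈ Rset v, ∀ o, (0 < z 0 o → r * v 1 o ≤ v 0 o) ∧ (0 < z 1 o → v 0 o ≤ r * v 1 o) := by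
  classical
  set ρ : Fin m → ℝ := fun o => v 0 o / v 1 o with hρ
  set L : Finset (Fin m) := (Tset v).filter (fun o => if 0 < v 1 o then 0 < z 1 o else 0 < z 0 o) with hL
  set U : Finset (Fin m) := (Tset v).filter (fun o => if 0 < v 1 o then 0 < z 0 o else 0 < z 1 o) with hU
  have key : ∀ o ∈ L, ∀ o' ∈ U, ρ o ≤ ρ o' := by
    intro o ho o' ho'
    obtain ⟨hoT, holdo⟩ := Finset.mem_filter.mp ho
    obtain ⟨hoT', holdo'⟩ := Finset.mem_filter.mp ho'
    exact KP hz hf (Finset.mem_filter.mp hoT).2 (Finset.mem_filter.mp hoT').2 holdo holdo'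
  -- choose r together with its properties
  have hchoice : ∃ r ∈ Rset v, (∀ o ∈ L, ρ o ≤ r) ∧ (∀ o' ∈ U, r ≤ ρ o') := by
    by_cases hUne : U.Nonempty
    · have hTne : (Tset v).Nonempty := by
        obtain ⟨o', ho'⟩ := hUne
        exact ⟨o', (Finset.mem_filter.mp ho').1⟩
      set r := (U.image ρ).min' (hUne.image ρ) with hr
      obtain ⟨o'', ho''U, ho''⟩ := Finset.mem_image.mp ((U.image ρ).min'_mem (hUne.image ρ))
      refine ⟨r, ?_, ?_, ?_⟩
      · rw [Rset, if_pos hTne]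
        exact Finset.mem_image.mpr ⟨o'', (Finset.mem_filter.mp ho''U).1, ho''⟩
      · intro o ho
        rw [hr, ← ho'']
        exact key o ho o'' ho''U
      · intro o' ho'
        exact Finset.min'_le _ _ (Finset.mem_image_of_mem ρ ho')
    · by_cases hLne : L.Nonempty
      · have hTne : (Tset v).Nonempty := by
          obtain ⟨o, ho⟩ := hLne
          exact ⟨o, (Finset.mem_filter.mp ho).1⟩
        set r := (L.image ρ).max' (hLne.image ρ) with hr
        obtain ⟨o'', ho''L, ho''⟩ := Finset.mem_image.mp ((L.image ρ).max'_mem (hLne.image ρ))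
        refine ⟨r, ?_, ?_, ?_⟩
        · rw [Rset, if_pos hTne]
          exact Finset.mem_image.mpr ⟨o'', (Finset.mem_filter.mp ho''L).1, ho''⟩
        · intro o ho
          exact Finset.le_max' _ _ (Finset.mem_image_of_mem ρ ho)
        · intro o' ho'
          exact absurd ⟨o', ho'⟩ hUne
      · have hTe : ¬ (Tset v).Nonempty := by
          intro ⟨o, ho⟩
          have hsum := hz.2 o
          rw [Fin.sum_univ_two] at hsum
          have h0 := hz.1 0 o
          have h1 := hz.1 1 o
          have : 0 < z 0 o ∨ 0 < z 1 o := by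
            by_contra hc
            push_neg at hc
            nlinarith [hc.1, hc.2]
          by_cases hv : 0 < v 1 o
          · rcases this with h | h
            · exact hUne ⟨o, Finset.mem_filter.mpr ⟨ho, by rw [if_pos hv]; exact h⟩⟩
            · exact hLne ⟨o, Finset.mem_filter.mpr ⟨ho, by rw [if_pos hv]; exact h⟩⟩
          · rcases this with h | h
            · exact hLne ⟨o, Finset.mem_filter.mpr ⟨ho, by rw [if_neg hv]; exact h⟩⟩
            · exact hUne ⟨o, Finset.mem_filter.mpr ⟨ho, by rw [if_neg hv]; exact h⟩⟩
        refine ⟨1, ?_, ?_, ?_⟩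
        · rw [Rset, if_neg hTe]; exact Finset.mem_singleton_self 1
        · intro o ho; exact absurd ⟨o, ho⟩ hLne
        · intro o' ho'; exact absurd ⟨o', ho'⟩ hUne
  obtain ⟨r, hrmem, P2, P3⟩ := hchoice
  have hrpos : 0 < r := Rset_pos v r hrmem
  refine ⟨r, hrmem, fun o => ⟨?_, ?_⟩⟩
  · -- 0 < z 0 o → r * v 1 o ≤ v 0 o
    intro hz0
    rcases lt_trichotomy (v 0 o) 0 with h0 | h0 | h0
    · rcases lt_trichotomy (v 1 o) 0 with h1 | h1 | h1
      · -- Q3, o ∈ L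
        have hT : o ∈ Tset v := Finset.mem_filter.mpr ⟨Finset.mem_univ o, mul_pos_of_neg_of_neg h0 h1⟩
        have hoL : o ∈ L := Finset.mem_filter.mpr ⟨hT, by rw [if_neg (not_lt.mpr h1.le)]; exact hz0⟩
        have := P2 o hoL
        rw [hρ] at this
        exact (div_le_iff_of_neg h1).mp this
      · exact (LB hz hf hz0 h1.ge h0.le (Or.inr h0)).elim
      · exact (LB hz hf hz0 h1.le h0.le (Or.inl h1)).elim
    · rcases lt_trichotomy (v 1 o) 0 with h1 | h1 | h1
      · nlinarith
      · simp [h0, h1]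
      · exact (LB hz hf hz0 h1.le h0.le (Or.inl h1)).elim
    · rcases le_or_gt (v 1 o) 0 with h1 | h1
      · nlinarith
      · have hT : o ∈ Tset v := Finset.mem_filter.mpr ⟨Finset.mem_univ o, mul_pos h0 h1⟩
        have hoU : o ∈ U := Finset.mem_filter.mpr ⟨hT, by rw [if_pos h1]; exact hz0⟩
        have := P3 o hoU
        rw [hρ] at this
        exact (le_div_iff₀ h1).mp this
  · -- 0 < z 1 o → v 0 o ≤ r * v 1 o
    intro hz1
    rcases lt_trichotomy (v 0 o) 0 with h0 | h0 | h0
    · rcases le_or_gt (v 1 o) 0 with h1 | h1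
      · rcases lt_or_eq_of_le h1 with h1' | h1'
        · -- Q3, o ∈ U
          have hT : o ∈ Tset v := Finset.mem_filter.mpr ⟨Finset.mem_univ o, mul_pos_of_neg_of_neg h0 h1'⟩
          have hoU : o ∈ U := Finset.mem_filter.mpr ⟨hT, by rw [if_neg (not_lt.mpr h1'.le)]; exact hz1⟩
          have := P3 o hoU
          rw [hρ] at this
          exact (le_div_iff_of_neg h1').mp this
        · nlinarith
      · nlinarith
    · rcases lt_trichotomy (v 1 o) 0 with h1 | h1 | h1
      · exact (LA hz hf hz1 h1.le h0.ge (Or.inl h1)).elim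
      · simp [h0, h1]
      · nlinarith
    · rcases le_or_gt (v 1 o) 0 with h1 | h1
      · exact (LA hz hf hz1 h1 h0.le (Or.inr h0)).elim
      · have hT : o ∈ Tset v := Finset.mem_filter.mpr ⟨Finset.mem_univ o, mul_pos h0 h1⟩
        have hoL : o ∈ L := Finset.mem_filter.mpr ⟨hT, by rw [if_pos h1]; exact hz1⟩
        have := P2 o hoL
        rw [hρ] at this
        exact (div_le_iff₀ h1).mp this

noncomputable def Gset {m : ℕ} (v : Fin 2 → Fin m → ℝ) (r : ℝ) : Set (Fin 2 → Fin m → Bool) :=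
  {g | ∀ o, (g 0 o = true ∨ g 1 o = true) ∧
    (r * v 1 o < v 0 o → g 0 o = true ∧ g 1 o = false) ∧
    (v 0 o < r * v 1 o → g 0 o = false ∧ g 1 o = true)}

lemma ncard_biUnion_le {α β : Type*} [Fintype α] (R : Finset β) (G : β → Set α) :
    (⋃ b ∈ R, G b).ncard ≤ ∑ b ∈ R, (G b).ncard := by
  classical
  induction R using Finset.induction with
  | empty => simp
  | insert a s hnot ih =>
    rw [Finset.set_biUnion_insert, Finset.sum_insert hnot]
    exact le_trans (Set.ncard_union_le _ _) (by omega)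

lemma Gset_card {m : ℕ} (v : Fin 2 → Fin m → ℝ) (r : ℝ) :
    (Gset v r).ncard ≤ 3 ^ (Finset.univ.filter (fun o : Fin m => v 0 o = r * v 1 o)).card := by
  classical
  set E := Finset.univ.filter (fun o : Fin m => v 0 o = r * v 1 o) with hE
  set Φ : (Fin 2 → Fin m → Bool) → (↥E → ({p : Bool × Bool // p ≠ (false, false)})) := fun g o =>
    if h : (g 0 o.1, g 1 o.1) = (false, false) then ⟨(true, true), by simp⟩
    else ⟨(g 0 o.1, g 1 o.1), h⟩ with hΦ
  have hinj : Set.InjOn Φ (Gset v r) := by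
    intro g hg g' hg' heq
    funext i o
    have c1 := (hg o).1
    have c1' := (hg' o).1
    by_cases hoE : o ∈ E
    · have h1 : (g 0 o, g 1 o) ≠ (false, false) := by
        rcases c1 with h | h <;> simp [h]
      have h1' : (g' 0 o, g' 1 o) ≠ (false, false) := by
        rcases c1' with h | h <;> simp [h]
      have := congrFun heq ⟨o, hoE⟩
      rw [hΦ] at this
      simp only [dif_neg h1, dif_neg h1'] at this
      have hpair : (g 0 o, g 1 o) = (g' 0 o, g' 1 o) := congrArg Subtype.val this
      obtain ⟨hp1, hp2⟩ := Prod.mk.injEq .. ▸ hpair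
      match i with
      | 0 => exact hp1
      | 1 => exact hp2
    · have hne : v 0 o ≠ r * v 1 o := by
        intro h
        exact hoE (Finset.mem_filter.mpr ⟨Finset.mem_univ o, h⟩)
      rcases lt_or_gt_of_ne hne with h | h
      · have a := (hg o).2.2 h
        have b := (hg' o).2.2 h
        match i with
        | 0 => rw [a.1, b.1]
        | 1 => rw [a.2, b.2]
      · have a := (hg o).2.1 h
        have b := (hg' o).2.1 h
        match i with
        | 0 => rw [a.1, b.1]
        | 1 => rw [a.2, b.2]
  have hcard : (Gset v r).ncard ≤ (Set.univ : Set (↥E → ({p : Bool × Bool // p ≠ (false, false)}))).ncard :=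
    Set.ncard_le_ncard_of_injOn Φ (fun a _ => Set.mem_univ _) hinj (Set.toFinite _)
  rw [Set.ncard_univ, Nat.card_eq_fintype_card, Fintype.card_fun] at hcard
  have h3 : Fintype.card ({p : Bool × Bool // p ≠ (false, false)}) = 3 := rfl
  rwa [h3, Fintype.card_coe] at hcard

/-- For two agents, the number of undirected consumption graphs of fPO allocations is
at most 3m·3^D. -/
theorem stmt14 {m : ℕ} (hm : 0 < m) (v : Fin 2 → Fin m → ℝ) (D : ℕ)
    (hD : ∀ r : ℝ, 0 < r →
      (Finset.univ.filter (fun o : Fin m => v 0 o = r * v 1 o)).card ≤ D + 1) :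
    Set.ncard {g : Fin 2 → Fin m → Bool |
        ∃ z, IsAllocation z ∧ IsFPO v z ∧ ∀ i o, g i o = true ↔ 0 < z i o}
      ≤ 3 * m * 3 ^ D := by
  classical
  have hsub : {g : Fin 2 → Fin m → Bool |
      ∃ z, IsAllocation z ∧ IsFPO v z ∧ ∀ i o, g i o = true ↔ 0 < z i o}
      ⊆ ⋃ r ∈ Rset v, Gset v r := by
    rintro g ⟨z, hz, hf, hg⟩
    obtain ⟨r, hrmem, hcl⟩ := member hz hf
    refine Set.mem_biUnion hrmem ?_
    intro o
    have hsum := hz.2 o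
    rw [Fin.sum_univ_two] at hsum
    have h0 := hz.1 0 o
    have h1 := hz.1 1 o
    have hor : 0 < z 0 o ∨ 0 < z 1 o := by
      by_contra hc
      push_neg at hc
      linarith [hc.1, hc.2]
    have cond1 : g 0 o = true ∨ g 1 o = true := by
      rcases hor with h | h
      · exact Or.inl ((hg 0 o).mpr h)
      · exact Or.inr ((hg 1 o).mpr h)
    refine ⟨cond1, ?_, ?_⟩
    · intro hlt
      have hg1 : g 1 o = false := by
        by_contra hc
        rw [Bool.not_eq_false] at hc
        have := (hcl o).2 ((hg 1 o).mp hc)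
        linarith
      rcases cond1 with h | h
      · exact ⟨h, hg1⟩
      · rw [h] at hg1; exact absurd hg1 (by simp)
    · intro hlt
      have hg0 : g 0 o = false := by
        by_contra hc
        rw [Bool.not_eq_false] at hc
        have := (hcl o).1 ((hg 0 o).mp hc)
        linarith
      rcases cond1 with h | h
      · rw [h] at hg0; exact absurd hg0 (by simp)
      · exact ⟨hg0, h⟩
  calc Set.ncard {g : Fin 2 → Fin m → Bool |
      ∃ z, IsAllocation z ∧ IsFPO v z ∧ ∀ i o, g i o = true ↔ 0 < z i o}
      ≤ (⋃ r ∈ Rset v, Gset v r).ncard :=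
        Set.ncard_le_ncard hsub (Set.toFinite _)
    _ ≤ ∑ r ∈ Rset v, (Gset v r).ncard := ncard_biUnion_le _ _
    _ ≤ ∑ _r ∈ Rset v, 3 ^ (D + 1) := by
        refine Finset.sum_le_sum ?_
        intro r hr
        refine le_trans (Gset_card v r) ?_
        exact Nat.pow_le_pow_right (by norm_num) (hD r (Rset_pos v r hr))
    _ = (Rset v).card * 3 ^ (D + 1) := by rw [Finset.sum_const, smul_eq_mul]
    _ ≤ m * 3 ^ (D + 1) := Nat.mul_le_mul_right _ (Rset_card v hm)
    _ = 3 * m * 3 ^ D := by ring
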